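/- Assume m ≥ 4. Then for all indices h, i, j, k the v-covariant derivative a^{hij}|^k := ∂a^{hij}/∂p_k + ∑_r (a^{rij}C_r^{hk} + a^{hrj}C_r^{ik} + a^{hir}C_r^{jk}) satisfies a^{hij}|^k = ((m−3)/K)·a^{hijk} + (m/(2K))·a^{hij}a^k − ((m−2)/(2K))·[ ∑_r (a_r^{hk}a^{rij} + a_r^{ik}a^{rhj} + a_r^{jk}a^{rhi}) − a^{kij}a^h − a^{hkj}a^i − a^{hik}a^j − a^{ij}a^{hk} − a^{hj}a^{ik} − a^{hi}a^{jk} + 2(a^{ij}a^h a^k + a^{hj}a^i a^k + a^{hi}a^j a^k) ]. -/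

import Mathlib

open Finset

noncomputable section

/-- `A(p) = ∑ a^{i₁…i_m} p_{i₁}⋯p_{i_m}`, where `m = M + 4 ≥ 4`. -/
def Afun {n M : ℕ} (a : (Fin (M + 4) → Fin n) → ℝ) (p : Fin n → ℝ) : ℝ :=
  ∑ ι : Fin (M + 4) → Fin n, a ι * ∏ t, p (ι t)

/-- `K(p) = A(p)^{1/m}`. -/
def Kfun {n M : ℕ} (a : (Fin (M + 4) → Fin n) → ℝ) (p : Fin n → ℝ) : ℝ :=
  Afun a p ^ ((1 : ℝ) / (M + 4))

/-- `a^i = (∑ a^{i i₂…i_m} p_{i₂}⋯p_{i_m}) / K^{m-1}`. -/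
def aU1 {n M : ℕ} (a : (Fin (M + 4) → Fin n) → ℝ) (i : Fin n) (p : Fin n → ℝ) : ℝ :=
  (∑ ι : Fin (M + 3) → Fin n, a (Fin.cons i ι) * ∏ t, p (ι t)) / Kfun a p ^ (M + 3)

/-- `a^{ij} = (∑ a^{i j i₃…i_m} p_{i₃}⋯p_{i_m}) / K^{m-2}`. -/
def aU2 {n M : ℕ} (a : (Fin (M + 4) → Fin n) → ℝ) (i j : Fin n) (p : Fin n → ℝ) : ℝ :=
  (∑ ι : Fin (M + 2) → Fin n, a (Fin.cons i (Fin.cons j ι)) * ∏ t, p (ι t)) / Kfun a p ^ (M + 2)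

/-- `a^{ijk} = (∑ a^{i j k i₄…i_m} p_{i₄}⋯p_{i_m}) / K^{m-3}`. -/
def aU3 {n M : ℕ} (a : (Fin (M + 4) → Fin n) → ℝ) (i j k : Fin n) (p : Fin n → ℝ) : ℝ :=
  (∑ ι : Fin (M + 1) → Fin n, a (Fin.cons i (Fin.cons j (Fin.cons k ι))) * ∏ t, p (ι t)) /
    Kfun a p ^ (M + 1)

/-- `a^{hijk} = (∑ a^{h i j k i₅…i_m} p_{i₅}⋯p_{i_m}) / K^{m-4}`. -/
def aU4 {n M : ℕ} (a : (Fin (M + 4) → Fin n) → ℝ) (h i j k : Fin n) (p : Fin n → ℝ) : ℝ :=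
  (∑ ι : Fin M → Fin n, a (Fin.cons h (Fin.cons i (Fin.cons j (Fin.cons k ι)))) * ∏ t, p (ι t)) /
    Kfun a p ^ M

/-- Partial derivative `∂f/∂p_k` of a function of `p`. -/
def pd {n : ℕ} (f : (Fin n → ℝ) → ℝ) (k : Fin n) (p : Fin n → ℝ) : ℝ :=
  deriv (fun t => f (Function.update p k t)) (p k)

/-- Fundamental metrical d-tensor `g^{ij} = (1/2) ∂²(K²)/∂p_i∂p_j`. -/
def gU {n M : ℕ} (a : (Fin (M + 4) → Fin n) → ℝ) (i j : Fin n) (p : Fin n → ℝ) : ℝ :=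
  (1 / 2 : ℝ) * pd (fun q => pd (fun r => Kfun a r ^ 2) j q) i p

/-- Angular metrical d-tensor `h^{ij} = K ∂²K/∂p_i∂p_j`. -/
def hU {n M : ℕ} (a : (Fin (M + 4) → Fin n) → ℝ) (i j : Fin n) (p : Fin n → ℝ) : ℝ :=
  Kfun a p * pd (fun q => pd (Kfun a) j q) i p

/-- v-torsion d-tensor `C^{ijk} = -(1/2) ∂g^{ij}/∂p_k`. -/
def CU {n M : ℕ} (a : (Fin (M + 4) → Fin n) → ℝ) (i j k : Fin n) (p : Fin n → ℝ) : ℝ :=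
  -(1 / 2 : ℝ) * pd (gU a i j) k p

/-- Symmetry of `a` in all of its `m` indices. -/
def aSym {n M : ℕ} (a : (Fin (M + 4) → Fin n) → ℝ) : Prop :=
  ∀ (σ : Equiv.Perm (Fin (M + 4))) (ι : Fin (M + 4) → Fin n), a (ι ∘ σ) = a ι

/-- `a_i = ∑_s a_{is} a^s`, where `aLow` is the inverse matrix of `(a^{ij})`. -/
def aL {n M : ℕ} (a : (Fin (M + 4) → Fin n) → ℝ) (aLow : Matrix (Fin n) (Fin n) ℝ)
    (p : Fin n → ℝ) (i : Fin n) : ℝ :=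
  ∑ s, aLow i s * aU1 a s p

/-- `a_i^{jk} = ∑_s a_{is} a^{sjk}`. -/
def aL3 {n M : ℕ} (a : (Fin (M + 4) → Fin n) → ℝ) (aLow : Matrix (Fin n) (Fin n) ℝ)
    (p : Fin n → ℝ) (i j k : Fin n) : ℝ :=
  ∑ s, aLow i s * aU3 a s j k p

/-- `g_{ij} = (1/(m-1)) a_{ij} + ((m-2)/(m-1)) a_i a_j`, the inverse of `g^{ij}`. -/
def gL {n M : ℕ} (a : (Fin (M + 4) → Fin n) → ℝ) (aLow : Matrix (Fin n) (Fin n) ℝ)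
    (p : Fin n → ℝ) (i j : Fin n) : ℝ :=
  (1 / (M + 3 : ℝ)) * aLow i j + ((M + 2 : ℝ) / (M + 3)) * aL a aLow p i * aL a aLow p j

/-- v-derivation components `C_i^{jk} = ∑_s g_{is} C^{sjk}`. -/
def CL {n M : ℕ} (a : (Fin (M + 4) → Fin n) → ℝ) (aLow : Matrix (Fin n) (Fin n) ℝ)
    (p : Fin n → ℝ) (i j k : Fin n) : ℝ :=
  ∑ s, gL a aLow p i s * CU a s j k p

namespace Stmt14Aux

variable {n N : ℕ}

def Pf (c : (Fin N → Fin n) → ℝ) (p : Fin n → ℝ) : ℝ :=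
  ∑ ι : Fin N → Fin n, c ι * ∏ t, p (ι t)

def Sym (c : (Fin N → Fin n) → ℝ) : Prop :=
  ∀ (σ : Equiv.Perm (Fin N)) (ι : Fin N → Fin n), c (ι ∘ σ) = c ι

def consPerm (σ : Equiv.Perm (Fin N)) : Equiv.Perm (Fin (N + 1)) where
  toFun := Fin.cons 0 (Fin.succ ∘ σ)
  invFun := Fin.cons 0 (Fin.succ ∘ σ.symm)
  left_inv t := by cases t using Fin.cases <;> simp
  right_inv t := by cases t using Fin.cases <;> simp

lemma cons_comp_consPerm (x : Fin n) (ι : Fin N → Fin n) (σ : Equiv.Perm (Fin N)) :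
    (Fin.cons x ι) ∘ (consPerm σ) = Fin.cons x (ι ∘ σ) := by
  funext t
  cases t using Fin.cases with
  | zero => simp [consPerm]
  | succ s => simp [consPerm]

lemma Sym.tail {c : (Fin (N + 1) → Fin n) → ℝ} (hc : Sym c) (x : Fin n) :
    Sym (fun ι => c (Fin.cons x ι)) := by
  intro σ ι
  simp only
  rw [← cons_comp_consPerm, hc]

lemma cons_comp_swap01 (x y : Fin n) (ι : Fin N → Fin n) :
    (Fin.cons x (Fin.cons y ι)) ∘ (Equiv.swap (0 : Fin (N + 2)) 1) = Fin.cons y (Fin.cons x ι) := by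
  funext t
  cases t using Fin.cases with
  | zero => simp [Equiv.swap_apply_left]
  | succ s =>
    cases s using Fin.cases with
    | zero =>
      have : ((0 : Fin (N+1)).succ : Fin (N+2)) = 1 := rfl
      rw [Function.comp_apply, this, Equiv.swap_apply_right]
      simp
    | succ u =>
      have h1 : (u.succ.succ : Fin (N+2)) ≠ 0 := Fin.succ_ne_zero _
      have h2 : (u.succ.succ : Fin (N+2)) ≠ 1 := by
        intro hh
        exact (Fin.succ_ne_zero u) (Fin.succ_injective _ hh)
      rw [Function.comp_apply, Equiv.swap_apply_of_ne_of_ne h1 h2]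
      simp

lemma Sym.swap01 {c : (Fin (N + 2) → Fin n) → ℝ} (hc : Sym c) (x y : Fin n)
    (ι : Fin N → Fin n) :
    c (Fin.cons x (Fin.cons y ι)) = c (Fin.cons y (Fin.cons x ι)) := by
  rw [← cons_comp_swap01 y x ι, hc]

lemma sum_cons_split (F : (Fin (N + 1) → Fin n) → ℝ) :
    ∑ ι : Fin (N + 1) → Fin n, F ι = ∑ s : Fin n, ∑ ι : Fin N → Fin n, F (Fin.cons s ι) := by
  rw [← (Fintype.sum_equiv (Fin.consEquiv (fun _ => Fin n)) _ (fun ι => F ι) (fun x => rfl)),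
    Fintype.sum_prod_type]
  rfl

lemma Pf_split (c : (Fin (N + 1) → Fin n) → ℝ) (p : Fin n → ℝ) :
    Pf c p = ∑ s : Fin n, p s * Pf (fun ι => c (Fin.cons s ι)) p := by
  rw [Pf, sum_cons_split]
  refine Finset.sum_congr rfl fun s _ => ?_
  rw [Pf, Finset.mul_sum]
  refine Finset.sum_congr rfl fun ι _ => ?_
  rw [Fin.prod_univ_succ]
  simp [mul_comm, mul_assoc, mul_left_comm]

lemma prod_erase_zero (f : Fin (N + 1) → ℝ) :
    ∏ t ∈ univ.erase (0 : Fin (N + 1)), f t = ∏ u : Fin N, f u.succ := by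
  refine Finset.prod_bij' (fun t ht => t.pred (Finset.ne_of_mem_erase ht))
    (fun u _ => u.succ) ?_ ?_ ?_ ?_ ?_
  · intro t ht; exact Finset.mem_univ _
  · intro u _
    exact Finset.mem_erase.2 ⟨Fin.succ_ne_zero u, Finset.mem_univ _⟩
  · intro t ht; simp
  · intro u _; simp
  · intro t ht; simp

lemma Pf_hasDerivAt (c : (Fin (N + 1) → Fin n) → ℝ) (hc : Sym c) (q : Fin n → ℝ) (k : Fin n) :
    HasDerivAt (fun t => Pf c (Function.update q k t))
      (((N : ℝ) + 1) * Pf (fun ι => c (Fin.cons k ι)) q) (q k) := by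
  have key : ∀ ι : Fin (N + 1) → Fin n,
      HasDerivAt (fun t => ∏ t', (Function.update q k t) (ι t'))
        (∑ t' ∈ univ.filter (fun t' => ι t' = k), ∏ t'' ∈ univ.erase t', q (ι t'')) (q k) := by
    intro ι
    have hf : ∀ t' ∈ (univ : Finset (Fin (N + 1))),
        HasDerivAt (fun t => (Function.update q k t) (ι t'))
          (if ι t' = k then (1 : ℝ) else 0) (q k) := by
      intro t' _
      by_cases hh : ι t' = k
      · simp only [hh, if_pos]
        have he : (fun t => (Function.update q k t) (ι t')) = fun t => t := by
          funext t; rw [hh]; simp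
        rw [hh] at he; rw [he]
        exact hasDerivAt_id _
      · simp only [hh, if_neg, not_false_iff]
        have : (fun t => (Function.update q k t) (ι t')) = fun _ => q (ι t') := by
          funext t; simp [Function.update_of_ne hh]
        rw [this]
        exact hasDerivAt_const _ _
    have := HasDerivAt.fun_finsetProd hf
    convert this using 1
    case e'_4 => rfl
    case e'_5 => rfl
    rw [Finset.sum_filter]
    refine Finset.sum_congr rfl fun t' _ => ?_
    by_cases hh : ι t' = k
    · simp only [hh, if_pos, smul_eq_mul, mul_one]
      refine Finset.prod_congr rfl fun t'' _ => ?_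
      simp [Function.update_eq_self]
    · simp [hh]
  have main : HasDerivAt (fun t => Pf c (Function.update q k t))
      (∑ ι : Fin (N + 1) → Fin n, c ι *
        ∑ t' ∈ univ.filter (fun t' => ι t' = k), ∏ t'' ∈ univ.erase t', q (ι t'')) (q k) := by
    have : ∀ ι ∈ (univ : Finset (Fin (N+1) → Fin n)),
        HasDerivAt (fun t => c ι * ∏ t', (Function.update q k t) (ι t'))
          (c ι * ∑ t' ∈ univ.filter (fun t' => ι t' = k), ∏ t'' ∈ univ.erase t', q (ι t''))
          (q k) := fun ι _ => (key ι).const_mul _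
    exact HasDerivAt.fun_sum this
  convert main using 1
  rw [eq_comm]
  calc
    ∑ ι : Fin (N + 1) → Fin n, c ι *
        ∑ t' ∈ univ.filter (fun t' => ι t' = k), ∏ t'' ∈ univ.erase t', q (ι t'')
      = ∑ ι : Fin (N + 1) → Fin n, ∑ t' : Fin (N + 1),
          (if ι t' = k then c ι * ∏ t'' ∈ univ.erase t', q (ι t'') else 0) := by
        refine Finset.sum_congr rfl fun ι _ => ?_
        rw [Finset.mul_sum, Finset.sum_filter]
    _ = ∑ t' : Fin (N + 1), ∑ ι : Fin (N + 1) → Fin n,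
          (if ι t' = k then c ι * ∏ t'' ∈ univ.erase t', q (ι t'') else 0) := Finset.sum_comm
    _ = ∑ t' : Fin (N + 1), Pf (fun ι => c (Fin.cons k ι)) q := by
        refine Finset.sum_congr rfl fun t' _ => ?_
        set σ := Equiv.swap (0 : Fin (N + 1)) t' with hσ
        have hinv : Function.Involutive (fun ι : Fin (N + 1) → Fin n => ι ∘ σ) := by
          intro ι; funext u; simp [σ, Equiv.swap_apply_self]
        rw [← Function.Bijective.sum_comp hinv.bijective
          (fun ι => if ι t' = k then c ι * ∏ t'' ∈ univ.erase t', q (ι t'') else 0)]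
        have hcongr : ∀ ι : Fin (N + 1) → Fin n,
            (if (ι ∘ σ) t' = k then c (ι ∘ σ) * ∏ t'' ∈ univ.erase t', q ((ι ∘ σ) t'') else 0)
            = (if ι 0 = k then c ι * ∏ t'' ∈ univ.erase 0, q (ι t'') else 0) := by
          intro ι
          have h0 : (ι ∘ σ) t' = ι 0 := by simp [σ, Equiv.swap_apply_right]
          have hcι : c (ι ∘ σ) = c ι := hc σ ι
          have hprod : ∏ t'' ∈ univ.erase t', q ((ι ∘ σ) t'') = ∏ t'' ∈ univ.erase 0, q (ι t'') := by
            refine Finset.prod_nbij' (fun t'' => σ t'') (fun t'' => σ t'') ?_ ?_ ?_ ?_ ?_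
            · intro t'' ht''
              refine Finset.mem_erase.2 ⟨?_, Finset.mem_univ _⟩
              have : σ t' = (0 : Fin (N + 1)) := by simp [σ, Equiv.swap_apply_right]
              intro hcontr
              exact (Finset.ne_of_mem_erase ht'') (σ.injective (hcontr.trans this.symm))
            · intro t'' ht''
              refine Finset.mem_erase.2 ⟨?_, Finset.mem_univ _⟩
              have : σ 0 = t' := by simp [σ, Equiv.swap_apply_left]
              intro hcontr
              exact (Finset.ne_of_mem_erase ht'') (σ.injective (hcontr.trans this.symm))
            · intro t'' _; simp [σ, Equiv.swap_apply_self]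
            · intro t'' _; simp [σ, Equiv.swap_apply_self]
            · intro t'' _; rfl
          rw [h0, hcι, hprod]
        rw [Finset.sum_congr rfl fun ι _ => hcongr ι]
        rw [sum_cons_split (fun ι => if ι 0 = k then c ι * ∏ t'' ∈ univ.erase 0, q (ι t'') else 0)]
        have : ∀ s : Fin n, ∑ ι : Fin N → Fin n,
            (if (Fin.cons s ι : Fin (N+1) → Fin n) 0 = k
              then c (Fin.cons s ι) * ∏ t'' ∈ univ.erase 0, q ((Fin.cons s ι : Fin (N+1) → Fin n) t'') else 0)
            = if s = k then Pf (fun ι => c (Fin.cons s ι)) q else 0 := by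
          intro s
          by_cases hs : s = k
          · simp only [Fin.cons_zero, hs, if_pos, Pf]
            refine Finset.sum_congr rfl fun ι _ => ?_
            congr 1
            rw [prod_erase_zero]
            exact Finset.prod_congr rfl fun u _ => by rw [Fin.cons_succ]
          · simp [Fin.cons_zero, hs]
        rw [Finset.sum_congr rfl fun s _ => this s, Finset.sum_ite_eq' univ k
          (fun s => Pf (fun ι => c (Fin.cons s ι)) q)]
        simp
    _ = ((N : ℝ) + 1) * Pf (fun ι => c (Fin.cons k ι)) q := by
        rw [Finset.sum_const, card_univ, Fintype.card_fin, nsmul_eq_mul]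
        push_cast
        ring

lemma hdc {f : ℝ → ℝ} {v w x : ℝ} (h : HasDerivAt f v x) (e : v = w) : HasDerivAt f w x :=
  e ▸ h

section Layer2

variable {n M : ℕ} (a : (Fin (M + 4) → Fin n) → ℝ)

lemma symA (hsym : aSym a) : Sym a := hsym

lemma Kpos {q : Fin n → ℝ} (hq : 0 < Afun a q) : 0 < Kfun a q :=
  Real.rpow_pos_of_pos hq _

lemma Kpow (j : ℕ) {q : Fin n → ℝ} (hq : 0 < Afun a q) :
    Kfun a q ^ j = Afun a q ^ ((j : ℝ) / (M + 4)) := by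
  rw [Kfun, ← Real.rpow_natCast (Afun a q ^ ((1:ℝ)/(M+4))) j, ← Real.rpow_mul hq.le]
  congr 1
  ring

lemma Kpow_top {q : Fin n → ℝ} (hq : 0 < Afun a q) :
    Kfun a q ^ (M + 4) = Afun a q := by
  rw [Kpow a (M+4) hq]
  have h4 : ((M : ℝ) + 4) ≠ 0 := by positivity
  rw [show (((M+4 : ℕ) : ℝ) / ((M:ℝ) + 4)) = 1 by push_cast; field_simp]
  exact Real.rpow_one _

lemma APf (q : Fin n → ℝ) : Afun a q = Pf a q := rfl

lemma K_hasDerivAt (hsym : aSym a) {q : Fin n → ℝ} (hq : 0 < Afun a q) (k : Fin n) :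
    HasDerivAt (fun t => Kfun a (Function.update q k t)) (aU1 a k q) (q k) := by
  have hA : HasDerivAt (fun t => Pf a (Function.update q k t))
      (((((M + 3 : ℕ) : ℝ)) + 1) * Pf (fun ι => a (Fin.cons k ι)) q) (q k) :=
    Pf_hasDerivAt a (symA a hsym) q k
  have hk' : HasDerivAt (fun t => Kfun a (Function.update q k t))
      ((((((M + 3 : ℕ) : ℝ)) + 1) * Pf (fun ι => a (Fin.cons k ι)) q) * ((1 : ℝ)/((M : ℝ) + 4)) *
        Afun a q ^ ((1 : ℝ)/((M : ℝ) + 4) - 1)) (q k) := by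
    have h2 := hA.rpow_const (p := (1 : ℝ)/((M : ℝ) + 4)) ?_
    · simp only [Function.update_eq_self] at h2
      exact h2
    · left
      simp only [Function.update_eq_self]
      exact ne_of_gt hq
  refine hdc hk' ?_
  have hKne : Kfun a q ≠ 0 := (Kpos a hq).ne'
  have hAne : Afun a q ≠ 0 := ne_of_gt hq
  have e2 : Afun a q ^ ((1 : ℝ)/((M : ℝ) + 4) - 1) = (Kfun a q ^ (M + 3))⁻¹ := by
    rw [Kpow a (M + 3) hq, ← Real.rpow_neg hq.le]
    congr 1
    push_cast
    have h4 : ((M : ℝ) + 4) ≠ 0 := by positivity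
    field_simp
    ring
  rw [e2]
  have hnum : aU1 a k q = Pf (fun ι => a (Fin.cons k ι)) q / Kfun a q ^ (M + 3) := rfl
  rw [hnum]
  have hKp : Kfun a q ^ (M + 3) ≠ 0 := pow_ne_zero _ hKne
  push_cast
  field_simp
  ring

lemma ratio_hasDerivAt (hsym : aSym a) {q : Fin n → ℝ} (hq : 0 < Afun a q) (k : Fin n)
    (L : ℕ) (c : (Fin (L + 1) → Fin n) → ℝ) (hcS : Sym c) :
    HasDerivAt (fun t => Pf c (Function.update q k t) / Kfun a (Function.update q k t) ^ (L + 1))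
      ((((L : ℕ) : ℝ) + 1) / Kfun a q *
        (Pf (fun ι => c (Fin.cons k ι)) q / Kfun a q ^ L
          - Pf c q / Kfun a q ^ (L + 1) * aU1 a k q)) (q k) := by
  have hKne : Kfun a q ≠ 0 := (Kpos a hq).ne'
  have hnum := Pf_hasDerivAt c hcS q k
  have hden := (K_hasDerivAt a hsym hq k).fun_pow (L + 1)
  have hden' : (fun t => Kfun a (Function.update q k t) ^ (L + 1)) (q k) ≠ 0 := by
    simp only [Function.update_eq_self]
    exact pow_ne_zero _ hKne
  have h := hnum.fun_div hden hden'
  simp only [Function.update_eq_self] at h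
  rw [Nat.add_sub_cancel] at h; push_cast at h
  refine hdc h ?_
  have hKp : ∀ j : ℕ, Kfun a q ^ j ≠ 0 := fun j => pow_ne_zero _ hKne
  field_simp
  ring

lemma aU1_hasDerivAt (hsym : aSym a) {q : Fin n → ℝ} (hq : 0 < Afun a q) (i k : Fin n) :
    HasDerivAt (fun t => aU1 a i (Function.update q k t))
      ((((M + 2 : ℕ) : ℝ) + 1) / Kfun a q *
        (aU2 a i k q - aU1 a i q * aU1 a k q)) (q k) :=
  ratio_hasDerivAt a hsym hq k (M + 2) (fun ι => a (Fin.cons i ι)) ((symA a hsym).tail i)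

lemma aU2_hasDerivAt (hsym : aSym a) {q : Fin n → ℝ} (hq : 0 < Afun a q) (i j k : Fin n) :
    HasDerivAt (fun t => aU2 a i j (Function.update q k t))
      ((((M + 1 : ℕ) : ℝ) + 1) / Kfun a q *
        (aU3 a i j k q - aU2 a i j q * aU1 a k q)) (q k) :=
  ratio_hasDerivAt a hsym hq k (M + 1) (fun ι => a (Fin.cons i (Fin.cons j ι)))
    (((symA a hsym).tail i).tail j)

lemma aU3_hasDerivAt (hsym : aSym a) {q : Fin n → ℝ} (hq : 0 < Afun a q) (h i j k : Fin n) :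
    HasDerivAt (fun t => aU3 a h i j (Function.update q k t))
      ((((M : ℕ) : ℝ) + 1) / Kfun a q *
        (aU4 a h i j k q - aU3 a h i j q * aU1 a k q)) (q k) :=
  ratio_hasDerivAt a hsym hq k M (fun ι => a (Fin.cons h (Fin.cons i (Fin.cons j ι))))
    ((((symA a hsym).tail h).tail i).tail j)

lemma Euler (L : ℕ) (c : (Fin (L + 1) → Fin n) → ℝ) (q : Fin n → ℝ)
    (hKne : Kfun a q ≠ 0) :
    ∑ s, q s * (Pf (fun ι => c (Fin.cons s ι)) q / Kfun a q ^ L)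
      = Kfun a q * (Pf c q / Kfun a q ^ (L + 1)) := by
  have hs := Pf_split c q
  have : ∑ s, q s * (Pf (fun ι => c (Fin.cons s ι)) q / Kfun a q ^ L)
      = (∑ s, q s * Pf (fun ι => c (Fin.cons s ι)) q) / Kfun a q ^ L := by
    rw [Finset.sum_div]
    exact Finset.sum_congr rfl fun s _ => (mul_div_assoc _ _ _).symm
  rw [this, ← hs, pow_succ]
  field_simp

lemma EulerA1 {q : Fin n → ℝ} (hq : 0 < Afun a q) :
    ∑ s, q s * aU1 a s q = Kfun a q := by
  have hKne : Kfun a q ≠ 0 := (Kpos a hq).ne'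
  have := Euler a (M + 3) a q hKne
  have h2 : Pf a q / Kfun a q ^ (M + 4) = 1 := by
    rw [← APf, ← Kpow_top a hq]
    field_simp
  calc ∑ s, q s * aU1 a s q
      = ∑ s, q s * (Pf (fun ι => a (Fin.cons s ι)) q / Kfun a q ^ (M + 3)) := rfl
    _ = Kfun a q * (Pf a q / Kfun a q ^ (M + 4)) := this
    _ = Kfun a q := by rw [h2, mul_one]

lemma EulerA2 {q : Fin n → ℝ} (hq : 0 < Afun a q) (i : Fin n) :
    ∑ s, q s * aU2 a i s q = Kfun a q * aU1 a i q :=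
  Euler a (M + 2) (fun ι => a (Fin.cons i ι)) q (Kpos a hq).ne'

lemma EulerA3 {q : Fin n → ℝ} (hq : 0 < Afun a q) (i j : Fin n) :
    ∑ s, q s * aU3 a i j s q = Kfun a q * aU2 a i j q :=
  Euler a (M + 1) (fun ι => a (Fin.cons i (Fin.cons j ι))) q (Kpos a hq).ne'

lemma EulerA4 {q : Fin n → ℝ} (hq : 0 < Afun a q) (h i j : Fin n) :
    ∑ s, q s * aU4 a h i j s q = Kfun a q * aU3 a h i j q :=
  Euler a M (fun ι => a (Fin.cons h (Fin.cons i (Fin.cons j ι)))) q (Kpos a hq).ne'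

lemma aU2_sym (hsym : aSym a) (i j : Fin n) (q : Fin n → ℝ) :
    aU2 a i j q = aU2 a j i q := by
  rw [aU2, aU2]
  congr 1
  exact Finset.sum_congr rfl fun ι _ => by rw [(symA a hsym).swap01 i j ι]

lemma aU3_sym12 (hsym : aSym a) (i j k : Fin n) (q : Fin n → ℝ) :
    aU3 a i j k q = aU3 a j i k q := by
  rw [aU3, aU3]
  congr 1
  exact Finset.sum_congr rfl fun ι _ => by rw [(symA a hsym).swap01 i j (Fin.cons k ι)]

lemma aU3_sym23 (hsym : aSym a) (i j k : Fin n) (q : Fin n → ℝ) :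
    aU3 a i j k q = aU3 a i k j q := by
  rw [aU3, aU3]
  congr 1
  exact Finset.sum_congr rfl fun ι _ =>
    by rw [((symA a hsym).tail i).swap01 j k ι]

lemma lineA_hasDerivAt (hsym : aSym a) (q : Fin n → ℝ) (k : Fin n) (t₀ : ℝ) :
    HasDerivAt (fun t => Afun a (Function.update q k t))
      ((((M + 3 : ℕ) : ℝ) + 1) *
        Pf (fun ι => a (Fin.cons k ι)) (Function.update q k t₀)) t₀ := by
  have h := Pf_hasDerivAt a (symA a hsym) (Function.update q k t₀) k
  simp only [Function.update_idem, Function.update_self] at h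
  exact h

lemma eventually_pos (hsym : aSym a) {q : Fin n → ℝ} (hq : 0 < Afun a q) (k : Fin n) :
    ∀ᶠ t in nhds (q k), 0 < Afun a (Function.update q k t) := by
  have hcont : ContinuousAt (fun t => Afun a (Function.update q k t)) (q k) :=
    (lineA_hasDerivAt a hsym q k (q k)).continuousAt
  have h0 : (fun t => Afun a (Function.update q k t)) (q k) ∈ Set.Ioi (0 : ℝ) := by
    simp only [Function.update_eq_self]
    exact hq
  exact hcont.eventually_mem (isOpen_Ioi.mem_nhds h0)

lemma pdK2 (hsym : aSym a) {q : Fin n → ℝ} (hq : 0 < Afun a q) (j : Fin n) :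
    pd (fun r => Kfun a r ^ 2) j q = 2 * Kfun a q * aU1 a j q := by
  have h := (K_hasDerivAt a hsym hq j).fun_pow 2
  simp only [Function.update_eq_self] at h
  simp only [pd]
  rw [h.deriv]
  norm_num

lemma gU_eq (hsym : aSym a) {q : Fin n → ℝ} (hq : 0 < Afun a q) (i j : Fin n) :
    gU a i j q = ((M : ℝ) + 3) * aU2 a j i q - ((M : ℝ) + 2) * (aU1 a i q * aU1 a j q) := by
  rw [gU]
  have hev := eventually_pos a hsym hq i
  have heq : (fun t => pd (fun r => Kfun a r ^ 2) j (Function.update q i t))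
      =ᶠ[nhds (q i)]
      (fun t => 2 * Kfun a (Function.update q i t) * aU1 a j (Function.update q i t)) :=
    hev.mono (fun t ht => pdK2 a hsym ht j)
  simp only [pd] at heq ⊢
  rw [heq.deriv_eq]
  have hd := ((K_hasDerivAt a hsym hq i).const_mul (2 : ℝ)).fun_mul (aU1_hasDerivAt a hsym hq j i)
  simp only [Function.update_eq_self] at hd
  rw [hd.deriv]
  have hKne : Kfun a q ≠ 0 := (Kpos a hq).ne'
  push_cast
  field_simp
  ring

lemma CU_eq (hsym : aSym a) {q : Fin n → ℝ} (hq : 0 < Afun a q) (s j k : Fin n) :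
    CU a s j k q = -((((M : ℝ) + 3) * ((M : ℝ) + 2)) / (2 * Kfun a q)) *
      (aU3 a j s k q - aU2 a j s q * aU1 a k q - aU2 a s k q * aU1 a j q
        - aU2 a j k q * aU1 a s q + 2 * (aU1 a s q * aU1 a j q * aU1 a k q)) := by
  rw [CU]
  have hev := eventually_pos a hsym hq k
  have heq : (fun t => gU a s j (Function.update q k t)) =ᶠ[nhds (q k)]
      (fun t => ((M : ℝ) + 3) * aU2 a j s (Function.update q k t)
        - ((M : ℝ) + 2) * (aU1 a s (Function.update q k t) * aU1 a j (Function.update q k t))) :=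
    hev.mono (fun t ht => gU_eq a hsym ht s j)
  simp only [pd]
  rw [heq.deriv_eq]
  have hd := ((aU2_hasDerivAt a hsym hq j s k).const_mul ((M : ℝ) + 3)).fun_sub
    (((aU1_hasDerivAt a hsym hq s k).fun_mul (aU1_hasDerivAt a hsym hq j k)).const_mul ((M : ℝ) + 2))
  simp only [Function.update_eq_self] at hd
  rw [hd.deriv]
  have hKne : Kfun a q ≠ 0 := (Kpos a hq).ne'
  push_cast
  field_simp
  ring

section Layer4

variable (hsym : aSym a) {p : Fin n → ℝ} (hA : 0 < Afun a p)
  (aLow : Matrix (Fin n) (Fin n) ℝ)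
  (hInv₂ : aLow * (Matrix.of fun i j => aU2 a i j p) = 1)

include hsym hA hInv₂

lemma hLow (i j : Fin n) :
    ∑ s, aLow i s * aU2 a s j p = if i = j then (1 : ℝ) else 0 := by
  have := congrFun (congrFun hInv₂ i) j
  rwa [Matrix.mul_apply, Matrix.one_apply] at this

lemma aL_eq (i : Fin n) : aL a aLow p i = p i / Kfun a p := by
  have hKne : Kfun a p ≠ 0 := (Kpos a hA).ne'
  have h1 : ∀ s, aU1 a s p = (∑ w, p w * aU2 a s w p) / Kfun a p := by
    intro s
    rw [EulerA2 a hA s]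
    field_simp
  rw [aL]
  calc ∑ s, aLow i s * aU1 a s p
      = ∑ s, ∑ w, p w * (aLow i s * aU2 a s w p) / Kfun a p := by
        refine Finset.sum_congr rfl fun s _ => ?_
        rw [h1 s, mul_div_assoc', Finset.mul_sum, Finset.sum_div]
        refine Finset.sum_congr rfl fun w _ => ?_
        ring
    _ = ∑ w, ∑ s, p w * (aLow i s * aU2 a s w p) / Kfun a p := Finset.sum_comm
    _ = ∑ w, p w * (∑ s, aLow i s * aU2 a s w p) / Kfun a p := by
        refine Finset.sum_congr rfl fun w _ => ?_
        rw [Finset.mul_sum, Finset.sum_div]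
    _ = ∑ w, p w * (if i = w then (1:ℝ) else 0) / Kfun a p := by
        refine Finset.sum_congr rfl fun w _ => ?_
        rw [hLow a hsym hA aLow hInv₂ i w]
    _ = p i / Kfun a p := by
        rw [Finset.sum_congr rfl (fun w _ => ?_), Finset.sum_ite_eq univ i
          (fun w => p w / Kfun a p)]
        · simp
        · by_cases hw : i = w
          · simp [hw]
          · simp [hw]

lemma SC0 (j k : Fin n) : ∑ s, p s * CU a s j k p = 0 := by
  have hKne : Kfun a p ≠ 0 := (Kpos a hA).ne'
  set C : ℝ := -((((M : ℝ) + 3) * ((M : ℝ) + 2)) / (2 * Kfun a p)) with hCdef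
  have hC : ∀ s, p s * CU a s j k p =
      C * (p s * aU3 a j k s p) - C * aU1 a k p * (p s * aU2 a j s p)
        - C * aU1 a j p * (p s * aU2 a k s p) - C * aU2 a j k p * (p s * aU1 a s p)
        + 2 * C * aU1 a j p * aU1 a k p * (p s * aU1 a s p) := by
    intro s
    rw [CU_eq a hsym hA s j k, aU3_sym23 a hsym j s k p, aU2_sym a hsym s k p]
    ring
  rw [Finset.sum_congr rfl (fun s _ => hC s)]
  simp only [Finset.sum_add_distrib, Finset.sum_sub_distrib, ← Finset.mul_sum]
  rw [EulerA3 a hA j k, EulerA2 a hA j, EulerA2 a hA k, EulerA1 a hA]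
  ring

lemma SCa (i j k : Fin n) :
    ∑ s, aLow i s * CU a s j k p =
      -((((M : ℝ) + 3) * ((M : ℝ) + 2)) / (2 * Kfun a p)) *
        (aL3 a aLow p i j k - (if i = j then (1:ℝ) else 0) * aU1 a k p
          - (if i = k then (1:ℝ) else 0) * aU1 a j p
          - (p i / Kfun a p) * aU2 a j k p
          + 2 * ((p i / Kfun a p) * aU1 a j p * aU1 a k p)) := by
  have hKne : Kfun a p ≠ 0 := (Kpos a hA).ne'
  set C : ℝ := -((((M : ℝ) + 3) * ((M : ℝ) + 2)) / (2 * Kfun a p)) with hCdef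
  have hC : ∀ s, aLow i s * CU a s j k p =
      C * (aLow i s * aU3 a s j k p) - C * aU1 a k p * (aLow i s * aU2 a s j p)
        - C * aU1 a j p * (aLow i s * aU2 a s k p) - C * aU2 a j k p * (aLow i s * aU1 a s p)
        + 2 * C * aU1 a j p * aU1 a k p * (aLow i s * aU1 a s p) := by
    intro s
    rw [CU_eq a hsym hA s j k, aU3_sym12 a hsym j s k p, aU2_sym a hsym j s p]
    ring
  rw [Finset.sum_congr rfl (fun s _ => hC s)]
  simp only [Finset.sum_add_distrib, Finset.sum_sub_distrib, ← Finset.mul_sum]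
  rw [show ∑ s, aLow i s * aU3 a s j k p = aL3 a aLow p i j k from rfl,
    show ∑ s, aLow i s * aU1 a s p = aL a aLow p i from rfl,
    hLow a hsym hA aLow hInv₂ i j, hLow a hsym hA aLow hInv₂ i k,
    aL_eq a hsym hA aLow hInv₂ i]
  ring

lemma CL_eq (i j k : Fin n) :
    CL a aLow p i j k =
      -(((M : ℝ) + 2) / (2 * Kfun a p)) *
        (aL3 a aLow p i j k - (if i = j then (1:ℝ) else 0) * aU1 a k p
          - (if i = k then (1:ℝ) else 0) * aU1 a j p
          - (p i / Kfun a p) * aU2 a j k p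
          + 2 * ((p i / Kfun a p) * aU1 a j p * aU1 a k p)) := by
  have hKne : Kfun a p ≠ 0 := (Kpos a hA).ne'
  have hM3 : ((M : ℝ) + 3) ≠ 0 := by positivity
  have hsplit : ∀ s, gL a aLow p i s * CU a s j k p =
      (1 / ((M : ℝ) + 3)) * (aLow i s * CU a s j k p)
        + (((M : ℝ) + 2) / ((M : ℝ) + 3)) * aL a aLow p i * (aL a aLow p s * CU a s j k p) := by
    intro s
    rw [gL]
    push_cast
    ring
  rw [CL, Finset.sum_congr rfl (fun s _ => hsplit s)]
  rw [Finset.sum_add_distrib, ← Finset.mul_sum, ← Finset.mul_sum]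
  have hzero : ∑ s, aL a aLow p s * CU a s j k p = 0 := by
    have : ∀ s, aL a aLow p s * CU a s j k p = (p s * CU a s j k p) / Kfun a p := by
      intro s
      rw [aL_eq a hsym hA aLow hInv₂ s]
      ring
    rw [Finset.sum_congr rfl (fun s _ => this s), ← Finset.sum_div,
      SC0 a hsym hA aLow hInv₂ j k, zero_div]
  rw [hzero, mul_zero, add_zero, SCa a hsym hA aLow hInv₂ i j k]
  field_simp

lemma Ssum (F : Fin n → ℝ) (x y : Fin n) (SF : ℝ)
    (hSF : ∑ r, p r * F r = Kfun a p * SF) :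
    ∑ r, F r * CL a aLow p r x y =
      -(((M : ℝ) + 2) / (2 * Kfun a p)) *
        ((∑ r, aL3 a aLow p r x y * F r) - F x * aU1 a y p - F y * aU1 a x p
          - SF * aU2 a x y p + 2 * (SF * aU1 a x p * aU1 a y p)) := by
  have hKne : Kfun a p ≠ 0 := (Kpos a hA).ne'
  set C : ℝ := -(((M : ℝ) + 2) / (2 * Kfun a p)) with hCdef
  have hC : ∀ r, F r * CL a aLow p r x y =
      C * (aL3 a aLow p r x y * F r)
        - C * aU1 a y p * (if r = x then F r else 0)
        - C * aU1 a x p * (if r = y then F r else 0)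
        - C / Kfun a p * aU2 a x y p * (p r * F r)
        + 2 * (C / Kfun a p * aU1 a x p * aU1 a y p) * (p r * F r) := by
    intro r
    rw [CL_eq a hsym hA aLow hInv₂ r x y]
    rcases eq_or_ne r x with h1 | h1
    · subst h1
      rcases eq_or_ne r y with h2 | h2
      · subst h2; simp; ring
      · simp [h2]; ring
    · rcases eq_or_ne r y with h2 | h2
      · subst h2; simp [h1]; ring
      · simp [h1, h2]; ring
  rw [Finset.sum_congr rfl (fun r _ => hC r)]
  simp only [Finset.sum_add_distrib, Finset.sum_sub_distrib, ← Finset.mul_sum]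
  rw [Finset.sum_ite_eq' univ x F, Finset.sum_ite_eq' univ y F, hSF]
  simp only [Finset.mem_univ, if_pos]
  field_simp

end Layer4

end Layer2

end Stmt14Aux

open Stmt14Aux

/-- for `m = M + 4 ≥ 4`, the v-covariant derivative
`a^{hij}|^k = ∂a^{hij}/∂p_k + ∑_r (a^{rij}C_r^{hk} + a^{hrj}C_r^{ik} + a^{hir}C_r^{jk})`
is given by the formula of Lemma 1 of the paper. -/
theorem stmt_14 {n M : ℕ} (hn : 4 ≤ n) (a : (Fin (M + 4) → Fin n) → ℝ)
    (hsym : aSym a) (p : Fin n → ℝ) (hA : 0 < Afun a p)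
    (aLow : Matrix (Fin n) (Fin n) ℝ)
    (hInv₁ : (Matrix.of fun i j => aU2 a i j p) * aLow = 1)
    (hInv₂ : aLow * (Matrix.of fun i j => aU2 a i j p) = 1) :
    ∀ h i j k : Fin n,
      pd (aU3 a h i j) k p + (∑ r, (aU3 a r i j p * CL a aLow p r h k +
          aU3 a h r j p * CL a aLow p r i k + aU3 a h i r p * CL a aLow p r j k)) =
        ((M + 1 : ℝ) / Kfun a p) * aU4 a h i j k p +
          ((M + 4 : ℝ) / (2 * Kfun a p)) * (aU3 a h i j p * aU1 a k p) -
          ((M + 2 : ℝ) / (2 * Kfun a p)) *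
            ((∑ r, (aL3 a aLow p r h k * aU3 a r i j p +
                aL3 a aLow p r i k * aU3 a r h j p +
                aL3 a aLow p r j k * aU3 a r h i p)) -
              aU3 a k i j p * aU1 a h p - aU3 a h k j p * aU1 a i p -
              aU3 a h i k p * aU1 a j p -
              aU2 a i j p * aU2 a h k p - aU2 a h j p * aU2 a i k p -
              aU2 a h i p * aU2 a j k p +
              2 * (aU2 a i j p * aU1 a h p * aU1 a k p +
                aU2 a h j p * aU1 a i p * aU1 a k p +
                aU2 a h i p * aU1 a j p * aU1 a k p)) := by
  intro h i j k
  have hKne : Kfun a p ≠ 0 := (Kpos a hA).ne'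
  have f1 : pd (aU3 a h i j) k p = (((M : ℕ) : ℝ) + 1) / Kfun a p *
      (aU4 a h i j k p - aU3 a h i j p * aU1 a k p) := by
    simp only [pd]
    exact (aU3_hasDerivAt a hsym hA h i j k).deriv
  have hsum : (∑ r, (aU3 a r i j p * CL a aLow p r h k +
        aU3 a h r j p * CL a aLow p r i k + aU3 a h i r p * CL a aLow p r j k))
      = (∑ r, aU3 a r i j p * CL a aLow p r h k)
        + (∑ r, aU3 a r h j p * CL a aLow p r i k)
        + (∑ r, aU3 a r h i p * CL a aLow p r j k) := by
    rw [← Finset.sum_add_distrib, ← Finset.sum_add_distrib]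
    refine Finset.sum_congr rfl fun r _ => ?_
    rw [aU3_sym12 a hsym h r j p,
      show aU3 a h i r p = aU3 a r h i p from by
        rw [aU3_sym23 a hsym h i r p, aU3_sym12 a hsym h r i p]]
  have hSF1 : ∑ r, p r * aU3 a r i j p = Kfun a p * aU2 a i j p := by
    have hrot : ∀ r, aU3 a r i j p = aU3 a i j r p := fun r => by
      rw [aU3_sym12 a hsym r i j p, aU3_sym23 a hsym i r j p]
    calc ∑ r, p r * aU3 a r i j p = ∑ r, p r * aU3 a i j r p :=
          Finset.sum_congr rfl (fun r _ => by rw [hrot r])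
      _ = Kfun a p * aU2 a i j p := EulerA3 a hA i j
  have hSF2 : ∑ r, p r * aU3 a r h j p = Kfun a p * aU2 a h j p := by
    have hrot : ∀ r, aU3 a r h j p = aU3 a h j r p := fun r => by
      rw [aU3_sym12 a hsym r h j p, aU3_sym23 a hsym h r j p]
    calc ∑ r, p r * aU3 a r h j p = ∑ r, p r * aU3 a h j r p :=
          Finset.sum_congr rfl (fun r _ => by rw [hrot r])
      _ = Kfun a p * aU2 a h j p := EulerA3 a hA h j
  have hSF3 : ∑ r, p r * aU3 a r h i p = Kfun a p * aU2 a h i p := by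
    have hrot : ∀ r, aU3 a r h i p = aU3 a h i r p := fun r => by
      rw [aU3_sym12 a hsym r h i p, aU3_sym23 a hsym h r i p]
    calc ∑ r, p r * aU3 a r h i p = ∑ r, p r * aU3 a h i r p :=
          Finset.sum_congr rfl (fun r _ => by rw [hrot r])
      _ = Kfun a p * aU2 a h i p := EulerA3 a hA h i
  have e1 := Ssum a hsym hA aLow hInv₂ (fun r => aU3 a r i j p) h k (aU2 a i j p) hSF1
  have e2 := Ssum a hsym hA aLow hInv₂ (fun r => aU3 a r h j p) i k (aU2 a h j p) hSF2
  have e3 := Ssum a hsym hA aLow hInv₂ (fun r => aU3 a r h i p) j k (aU2 a h i p) hSF3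
  rw [f1, hsum, e1, e2, e3]
  rw [show aU3 a i h j p = aU3 a h i j p from (aU3_sym12 a hsym h i j p).symm,
    show aU3 a k h j p = aU3 a h k j p from (aU3_sym12 a hsym h k j p).symm,
    show aU3 a j h i p = aU3 a h i j p from by
      rw [aU3_sym12 a hsym j h i p, aU3_sym23 a hsym h j i p],
    show aU3 a k h i p = aU3 a h i k p from by
      rw [aU3_sym12 a hsym k h i p, aU3_sym23 a hsym h k i p]]
  rw [Finset.sum_add_distrib, Finset.sum_add_distrib]
  field_simp
  ring
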